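/- Let f(z) = ∑_{j=0}^∞ p_j z^j be entire with p_j ≥ 0 and lim_{r→∞} ln f(r)/(ln r)² = β ∈ (0,∞). Then limsup_{j→∞} (ln p_j)/j² ≤ -1/(4β). -/

import Mathlib

open Filter

set_option maxHeartbeats 1000000

/-- Cauchy-estimate coefficient bound: if `f(z) = ∑ p_j z^j` is entire with positive
coefficients and `lim_{r→∞} ln f(r)/(ln r)² = β ∈ (0,∞)`, then
`limsup_{j→∞} (ln p_j)/j² ≤ -1/(4β)`. -/
theorem coeff_upper_bound (p : ℕ → ℝ) (hp : ∀ j, 0 < p j)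
    (hent : ∀ r : ℝ, 0 < r → Summable (fun j : ℕ => p j * r ^ j))
    (β : ℝ) (hβ : 0 < β)
    (hlim : Tendsto (fun r : ℝ => Real.log (∑' j : ℕ, p j * r ^ j) / (Real.log r) ^ 2)
      atTop (nhds β)) :
    limsup (fun j : ℕ => Real.log (p j) / (j : ℝ) ^ 2) atTop ≤ -1 / (4 * β) := by
  set F : ℝ → ℝ := fun r => ∑' j : ℕ, p j * r ^ j with hF
  have hcauchy : ∀ r : ℝ, 0 < r → ∀ j, p j * r ^ j ≤ F r := fun r hr j =>
    Summable.le_tsum (hent r hr) j (fun i _ => mul_nonneg (hp i).le (by positivity))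
  have hFpos : ∀ r : ℝ, 0 < r → 0 < F r := by
    intro r hr
    have h0 := hcauchy r hr 0
    have : p 0 * r ^ 0 = p 0 := by ring
    rw [this] at h0
    exact lt_of_lt_of_le (hp 0) h0
  have cobdd : IsCoboundedUnder (· ≤ ·) atTop
      (fun j : ℕ => Real.log (p j) / (j : ℝ) ^ 2) := by
    apply IsCoboundedUnder.of_frequently_ge (a := -1 / β)
    by_contra hcon
    rw [not_frequently] at hcon
    obtain ⟨N0, hN0⟩ := eventually_atTop.mp hcon
    set N := max N0 1 with hN_def
    have hN1 : 1 ≤ N := le_max_right _ _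
    have hcoef : ∀ j, N ≤ j → p j ≤ Real.exp (-(j : ℝ) ^ 2 / β) := by
      intro j hj
      have h := not_le.mp (hN0 j (le_trans (le_max_left _ _) hj))
      have hj1 : 1 ≤ j := le_trans hN1 hj
      have hj0 : (0 : ℝ) < (j : ℝ) ^ 2 := by
        have : (0:ℝ) < (j:ℝ) := by exact_mod_cast hj1
        positivity
      have hlog : Real.log (p j) < -(j : ℝ) ^ 2 / β := by
        have h2 := (div_lt_iff₀ hj0).mp h
        calc Real.log (p j) < -1 / β * (j:ℝ)^2 := h2
          _ = -(j : ℝ) ^ 2 / β := by ring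
      calc p j = Real.exp (Real.log (p j)) := (Real.exp_log (hp j)).symm
        _ ≤ Real.exp (-(j : ℝ) ^ 2 / β) := Real.exp_le_exp.mpr hlog.le
    set D := ∑ i ∈ Finset.range N, p i with hD_def
    have hD : 0 < D :=
      Finset.sum_pos (fun i _ => hp i) (Finset.nonempty_range_iff.mpr (by omega))
    set q := Real.exp (-1 / (2 * β)) with hq_def
    have hq0 : 0 < q := Real.exp_pos _
    have hq1 : q < 1 := by
      rw [hq_def]
      apply Real.exp_lt_one_iff.mpr
      have : 0 < 2 * β := by positivity
      exact div_neg_of_neg_of_pos (by norm_num) this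
    -- eventual conditions on t
    have e2 : ∀ᶠ t : ℝ in atTop, (N : ℝ) + 2 * β * t + 1 ≤ Real.exp t := by
      filter_upwards [eventually_ge_atTop (8 * β), eventually_ge_atTop ((N : ℝ)),
        eventually_ge_atTop 0] with t h1 h2 h0
      have hq' := Real.add_one_le_exp (t / 2)
      have hsq : (t / 2 + 1) * (t / 2 + 1) ≤ Real.exp (t / 2) * Real.exp (t / 2) :=
        mul_le_mul hq' hq' (by linarith) (Real.exp_nonneg _)
      rw [← Real.exp_add] at hsq
      have ht : t / 2 + t / 2 = t := by ring
      rw [ht] at hsq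
      nlinarith
    have e3 : ∀ᶠ t : ℝ in atTop, D * Real.exp ((N : ℝ) * t) ≤ Real.exp (β * t ^ 2 / 4) := by
      filter_upwards [eventually_ge_atTop (4 * ((N : ℝ) + 1) / β),
        eventually_ge_atTop (Real.log D), eventually_ge_atTop 0] with t h1 h2 h0
      have hDr : D * Real.exp ((N : ℝ) * t) = Real.exp (Real.log D + (N : ℝ) * t) := by
        rw [Real.exp_add, Real.exp_log hD]
      rw [hDr]
      apply Real.exp_le_exp.mpr
      have h1' : 4 * ((N : ℝ) + 1) ≤ β * t := by
        rw [div_le_iff₀ hβ] at h1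
        linarith
      nlinarith
    have e5 : ∀ᶠ t : ℝ in atTop, t + Real.log 3 ≤ β * t ^ 2 / 4 := by
      filter_upwards [eventually_ge_atTop (8 / β), eventually_ge_atTop (Real.log 3),
        eventually_ge_atTop 0] with t h1 h2 h0
      have h1' : 8 ≤ β * t := by
        rw [div_le_iff₀ hβ] at h1
        linarith
      nlinarith
    have e4 : ∀ᶠ t : ℝ in atTop, (1 - q)⁻¹ ≤ Real.exp t :=
      Real.tendsto_exp_atTop.eventually_ge_atTop _
    have emain : ∀ᶠ t : ℝ in atTop, Real.log (F (Real.exp t)) / t ^ 2 ≤ β / 2 := by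
      filter_upwards [eventually_ge_atTop 1, e2, e3, e5, e4] with t ht1 ht2 ht3 ht5 ht4
      have ht0 : (0 : ℝ) < t := lt_of_lt_of_le one_pos ht1
      set r := Real.exp t with hr_def
      have hr : 0 < r := Real.exp_pos _
      have hr1 : 1 ≤ r := Real.one_le_exp ht0.le
      set M := N + ⌈2 * β * t⌉₊ with hM_def
      have hMN : N ≤ M := Nat.le_add_right _ _
      have hM2βt : 2 * β * t ≤ (M : ℝ) := by
        refine le_trans (Nat.le_ceil _) ?_
        exact_mod_cast Nat.le_add_left _ _
      have hMle : (M : ℝ) ≤ Real.exp t := by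
        have hceil : (⌈2 * β * t⌉₊ : ℝ) ≤ 2 * β * t + 1 :=
          (Nat.ceil_lt_add_one (by positivity)).le
        have : (M : ℝ) ≤ (N : ℝ) + (2 * β * t + 1) := by
          rw [hM_def]
          push_cast
          linarith
        linarith
      -- powers of r as exponentials
      have hrpow : ∀ j : ℕ, r ^ j = Real.exp ((j : ℝ) * t) := by
        intro j
        rw [hr_def, ← Real.exp_nat_mul]
      -- generic middle/tail term bound
      have hgen : ∀ j : ℕ, N ≤ j →
          p j * r ^ j ≤ Real.exp (-(j : ℝ) ^ 2 / β + (j : ℝ) * t) := by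
        intro j hj
        rw [hrpow j, Real.exp_add]
        exact mul_le_mul_of_nonneg_right (hcoef j hj) (Real.exp_nonneg _)
      -- head bound
      have hhead : ∑ j ∈ Finset.range M, p j * r ^ j ≤
          (M : ℝ) * (D * r ^ N + Real.exp (β * t ^ 2 / 4)) := by
        have hterm : ∀ j ∈ Finset.range M,
            p j * r ^ j ≤ D * r ^ N + Real.exp (β * t ^ 2 / 4) := by
          intro j _
          rcases lt_or_ge j N with hjN | hjN
          · have hpD : p j ≤ D :=
              Finset.single_le_sum (f := p) (fun i _ => (hp i).le)
                (Finset.mem_range.mpr hjN)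
            have hrj : r ^ j ≤ r ^ N := pow_le_pow_right₀ hr1 hjN.le
            have : p j * r ^ j ≤ D * r ^ N :=
              mul_le_mul hpD hrj (by positivity) hD.le
            linarith [Real.exp_pos (β * t ^ 2 / 4)]
          · have h1 := hgen j hjN
            have h2 : -(j : ℝ) ^ 2 / β + (j : ℝ) * t ≤ β * t ^ 2 / 4 := by
              have hrw2 : -(j : ℝ) ^ 2 / β + (j : ℝ) * t =
                  (-(j : ℝ) ^ 2 + (j : ℝ) * t * β) / β := by
                field_simp
              rw [hrw2, div_le_iff₀ hβ]
              nlinarith [sq_nonneg ((j : ℝ) - β * t / 2)]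
            have : p j * r ^ j ≤ Real.exp (β * t ^ 2 / 4) :=
              le_trans h1 (Real.exp_le_exp.mpr h2)
            have hDr : 0 ≤ D * r ^ N := by positivity
            linarith
        calc ∑ j ∈ Finset.range M, p j * r ^ j
            ≤ (Finset.range M).card • (D * r ^ N + Real.exp (β * t ^ 2 / 4)) :=
              Finset.sum_le_card_nsmul _ _ _ hterm
          _ = (M : ℝ) * (D * r ^ N + Real.exp (β * t ^ 2 / 4)) := by
              rw [Finset.card_range, nsmul_eq_mul]
      -- tail bound
      have htail : (∑' k : ℕ, p (k + M) * r ^ (k + M)) ≤ (1 - q)⁻¹ := by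
        have hterm : ∀ k : ℕ, p (k + M) * r ^ (k + M) ≤ q ^ k := by
          intro k
          have hjN : N ≤ k + M := le_trans hMN (Nat.le_add_left _ _)
          have hj1 : 1 ≤ k + M := le_trans hN1 hjN
          have hjR : (1 : ℝ) ≤ ((k + M : ℕ) : ℝ) := by exact_mod_cast hj1
          have hjt : 2 * β * t ≤ ((k + M : ℕ) : ℝ) := by
            refine le_trans hM2βt ?_
            exact_mod_cast Nat.le_add_left _ _
          have h1 := hgen (k + M) hjN
          have h2 : -((k + M : ℕ) : ℝ) ^ 2 / β + ((k + M : ℕ) : ℝ) * t ≤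
              -((k + M : ℕ) : ℝ) / (2 * β) := by
            set x := ((k + M : ℕ) : ℝ)
            have hrw2 : -x ^ 2 / β + x * t = (-x ^ 2 + x * t * β) / β := by field_simp
            have hrw3 : -x / (2 * β) = (-x / 2) / β := by
              field_simp
            rw [hrw2, hrw3, div_le_div_iff₀ hβ hβ]
            have hx0 : (0 : ℝ) ≤ x := le_trans zero_le_one hjR
            have htb : t * β ≤ x / 2 := by linarith [hjt]
            have hxt : x * (t * β) ≤ x * (x / 2) := mul_le_mul_of_nonneg_left htb hx0
            have hxx : x ≤ x ^ 2 := by nlinarith [mul_nonneg (by linarith : (0:ℝ) ≤ x - 1) hx0]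
            have hkey : -x ^ 2 + x * t * β ≤ -x / 2 := by nlinarith [hxt, hxx]
            nlinarith [mul_le_mul_of_nonneg_right hkey hβ.le]
          have h3 : Real.exp (-((k + M : ℕ) : ℝ) / (2 * β)) = q ^ (k + M) := by
            rw [hq_def, ← Real.exp_nat_mul]
            congr 1
            ring
          have h4 : q ^ (k + M) ≤ q ^ k :=
            pow_le_pow_of_le_one hq0.le hq1.le (Nat.le_add_right _ _)
          calc p (k + M) * r ^ (k + M)
              ≤ Real.exp (-((k + M : ℕ) : ℝ) ^ 2 / β + ((k + M : ℕ) : ℝ) * t) := h1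
            _ ≤ Real.exp (-((k + M : ℕ) : ℝ) / (2 * β)) := Real.exp_le_exp.mpr h2
            _ = q ^ (k + M) := h3
            _ ≤ q ^ k := h4
        have hsq : Summable (fun k : ℕ => q ^ k) :=
          summable_geometric_of_lt_one hq0.le hq1
        calc (∑' k : ℕ, p (k + M) * r ^ (k + M))
            ≤ ∑' k : ℕ, q ^ k :=
              Summable.tsum_le_tsum hterm ((summable_nat_add_iff (f := fun n => p n * r ^ n) M).mpr (hent r hr)) hsq
          _ = (1 - q)⁻¹ := tsum_geometric_of_lt_one hq0.le hq1
      -- combine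
      have hsplit := Summable.sum_add_tsum_nat_add M (hent r hr)
      have hFbound : F r ≤ 3 * Real.exp (t + β * t ^ 2 / 4) := by
        have hF_eq : F r = (∑ j ∈ Finset.range M, p j * r ^ j) +
            ∑' k : ℕ, p (k + M) * r ^ (k + M) := hsplit.symm
        have hrN : r ^ N = Real.exp ((N : ℝ) * t) := hrpow N
        have hX : D * r ^ N + Real.exp (β * t ^ 2 / 4) ≤ 2 * Real.exp (β * t ^ 2 / 4) := by
          rw [hrN]; linarith
        have hXpos : 0 ≤ D * r ^ N + Real.exp (β * t ^ 2 / 4) := by positivity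
        have hhead2 : (M : ℝ) * (D * r ^ N + Real.exp (β * t ^ 2 / 4)) ≤
            Real.exp t * (2 * Real.exp (β * t ^ 2 / 4)) := by
          have hM0 : (0:ℝ) ≤ (M:ℝ) := Nat.cast_nonneg _
          calc (M : ℝ) * (D * r ^ N + Real.exp (β * t ^ 2 / 4))
              ≤ Real.exp t * (D * r ^ N + Real.exp (β * t ^ 2 / 4)) :=
                mul_le_mul_of_nonneg_right hMle hXpos
            _ ≤ Real.exp t * (2 * Real.exp (β * t ^ 2 / 4)) :=
                mul_le_mul_of_nonneg_left hX (Real.exp_nonneg _)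
        have h1e : (1 : ℝ) ≤ Real.exp (β * t ^ 2 / 4) := Real.one_le_exp (by positivity)
        calc F r ≤ (M : ℝ) * (D * r ^ N + Real.exp (β * t ^ 2 / 4)) +
              ∑' k : ℕ, p (k + M) * r ^ (k + M) := by
              rw [hF_eq]; exact add_le_add_left hhead _
          _ ≤ Real.exp t * (2 * Real.exp (β * t ^ 2 / 4)) + (1 - q)⁻¹ :=
              add_le_add hhead2 htail
          _ ≤ Real.exp t * (2 * Real.exp (β * t ^ 2 / 4)) + Real.exp t := by linarith
          _ ≤ Real.exp t * (2 * Real.exp (β * t ^ 2 / 4)) +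
              Real.exp t * Real.exp (β * t ^ 2 / 4) := by
              nlinarith [Real.exp_pos t]
          _ = 3 * Real.exp (t + β * t ^ 2 / 4) := by
              rw [Real.exp_add]; ring
      have hlogF : Real.log (F r) ≤ β * t ^ 2 / 2 := by
        have hlog3 : Real.log (3 * Real.exp (t + β * t ^ 2 / 4)) =
            Real.log 3 + (t + β * t ^ 2 / 4) := by
          rw [Real.log_mul (by norm_num) (Real.exp_ne_zero _), Real.log_exp]
        calc Real.log (F r) ≤ Real.log (3 * Real.exp (t + β * t ^ 2 / 4)) :=
              Real.log_le_log (hFpos r hr) hFbound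
          _ = Real.log 3 + (t + β * t ^ 2 / 4) := hlog3
          _ ≤ β * t ^ 2 / 2 := by linarith
      calc Real.log (F r) / t ^ 2 ≤ (β * t ^ 2 / 2) / t ^ 2 :=
            div_le_div_of_nonneg_right hlogF (by positivity)
        _ = β / 2 := by field_simp
    have elow : ∀ᶠ t : ℝ in atTop, β / 2 < Real.log (F (Real.exp t)) / t ^ 2 := by
      have hcomp : Tendsto (fun t : ℝ =>
          Real.log (F (Real.exp t)) / (Real.log (Real.exp t)) ^ 2) atTop (nhds β) :=
        hlim.comp Real.tendsto_exp_atTop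
      have h' : Tendsto (fun t : ℝ => Real.log (F (Real.exp t)) / t ^ 2) atTop (nhds β) := by
        simpa [Real.log_exp] using hcomp
      exact h'.eventually_const_lt (by linarith)
    obtain ⟨t, h1, h2⟩ := (emain.and elow).exists
    linarith
  -- for each β' > β, limsup ≤ -1/(4β')
  have key : ∀ β' : ℝ, β < β' →
      limsup (fun j : ℕ => Real.log (p j) / (j : ℝ) ^ 2) atTop ≤ -1 / (4 * β') := by
    intro β' hβ'
    have hβ'0 : 0 < β' := hβ.trans hβ'
    have hev : ∀ᶠ r : ℝ in atTop, Real.log (F r) ≤ β' * (Real.log r) ^ 2 := by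
      have h1 : ∀ᶠ r : ℝ in atTop, Real.log (F r) / (Real.log r) ^ 2 < β' :=
        hlim.eventually_lt_const hβ'
      filter_upwards [h1, eventually_gt_atTop 1] with r h hr1
      have hlr : 0 < Real.log r := Real.log_pos hr1
      have h2 := (div_lt_iff₀ (by positivity)).mp h
      linarith
    have htend : Tendsto (fun j : ℕ => Real.exp ((j : ℝ) / (2 * β'))) atTop atTop := by
      apply Real.tendsto_exp_atTop.comp
      apply Tendsto.atTop_div_const (by positivity)
      exact tendsto_natCast_atTop_atTop
    have hevj := htend.eventually hev
    apply limsup_le_of_le cobdd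
    filter_upwards [hevj, eventually_ge_atTop 1] with j hj hj1
    set r := Real.exp ((j : ℝ) / (2 * β')) with hr_def
    have hr : 0 < r := Real.exp_pos _
    have hj0 : (0 : ℝ) < (j : ℝ) := by exact_mod_cast hj1
    have h1 : p j ≤ F r / r ^ j := (le_div_iff₀ (by positivity)).mpr (hcauchy r hr j)
    have h2 : Real.log (p j) ≤ Real.log (F r) - (j : ℝ) * Real.log r := by
      calc Real.log (p j) ≤ Real.log (F r / r ^ j) := Real.log_le_log (hp j) h1
        _ = Real.log (F r) - Real.log (r ^ j) :=
            Real.log_div (ne_of_gt (hFpos r hr)) (by positivity)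
        _ = Real.log (F r) - (j : ℝ) * Real.log r := by rw [Real.log_pow]
    rw [hr_def, Real.log_exp] at hj h2
    have h3 : Real.log (p j) ≤ -(j : ℝ) ^ 2 / (4 * β') := by
      have : Real.log (p j) ≤ β' * ((j : ℝ) / (2 * β')) ^ 2 - (j : ℝ) * ((j : ℝ) / (2 * β')) :=
        le_trans h2 (by linarith)
      calc Real.log (p j) ≤ β' * ((j : ℝ) / (2 * β')) ^ 2 - (j : ℝ) * ((j : ℝ) / (2 * β')) := this
        _ = -(j : ℝ) ^ 2 / (4 * β') := by field_simp; ring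
    calc Real.log (p j) / (j : ℝ) ^ 2 ≤ (-(j : ℝ) ^ 2 / (4 * β')) / (j : ℝ) ^ 2 := by
          apply div_le_div_of_nonneg_right h3 (by positivity)
      _ = -1 / (4 * β') := by field_simp
  apply le_of_forall_pos_le_add
  intro ε hε
  have hβ' : β < β + 4 * β ^ 2 * ε := lt_add_of_pos_right _ (by positivity)
  refine (key _ hβ').trans ?_
  have hrw : -1 / (4 * β) + ε = (4 * β * ε - 1) / (4 * β) := by field_simp; ring
  rw [hrw, div_le_div_iff₀ (by positivity) (by positivity)]
  nlinarith [mul_pos hβ hε, mul_pos (mul_pos hβ hβ) hε]
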